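/- (BK inequality) Let E be a finite set, Ω = {0,1}^E with a product probability measure P. For increasing events A, B ⊆ Ω, the disjoint occurrence A ∘ B = {ω : ∃ F ⊆ E with ω_F ∈ A and ω_{E∖F} ∈ B} satisfies P(A ∘ B) ≤ P(A) P(B). -/

import Mathlib

open MeasureTheory
open scoped ENNReal

namespace BKproof

variable {E : Type*} [Fintype E] [DecidableEq E]

/-- Weight of a configuration. -/
noncomputable def W (μ : E → Measure Bool) (ω : E → Bool) : ℝ≥0∞ := ∏ e, μ e {ω e}

open Classical in
/-- Sum version of the product measure on single space. -/
noncomputable def Ps (μ : E → Measure Bool) (S : Set (E → Bool)) : ℝ≥0∞ :=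
  ∑ ω : E → Bool, if ω ∈ S then W μ ω else 0

open Classical in
/-- Sum version of the product measure on the doubled space. -/
noncomputable def ν (μ : E → Measure Bool) (S : Set ((E → Bool) × (E → Bool))) : ℝ≥0∞ :=
  ∑ p : (E → Bool) × (E → Bool), if p ∈ S then W μ p.1 * W μ p.2 else 0

lemma measurableSet_all (S : Set (E → Bool)) : MeasurableSet S := by
  classical
  have h1 : ∀ ω : E → Bool, MeasurableSet ({ω} : Set (E → Bool)) := by
    intro ω
    have : ({ω} : Set (E → Bool)) = Set.univ.pi fun e => {ω e} := by
      ext g; simp [Set.mem_pi, funext_iff, eq_comm]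
    rw [this]
    exact MeasurableSet.univ_pi fun e => measurableSet_singleton _
  have : S = ⋃ ω ∈ S, {ω} := by simp
  rw [this]
  exact MeasurableSet.biUnion (Set.to_countable S) fun ω _ => h1 ω

lemma measure_eq_Ps (μ : E → Measure Bool) [∀ e, IsProbabilityMeasure (μ e)]
    (S : Set (E → Bool)) :
    Measure.pi μ S = Ps μ S := by
  classical
  have hsing : ∀ ω : E → Bool, Measure.pi μ {ω} = W μ ω := by
    intro ω
    have : ({ω} : Set (E → Bool)) = Set.univ.pi fun e => {ω e} := by
      ext g; simp [Set.mem_pi, funext_iff, eq_comm]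
    rw [this, Measure.pi_pi]; rfl
  have hS : S = ⋃ ω ∈ S.toFinset, ({ω} : Set (E → Bool)) := by simp
  have h1 : Measure.pi μ S = ∑ ω ∈ S.toFinset, W μ ω := by
    conv_lhs => rw [hS]
    rw [measure_biUnion_finset ?_ (fun ω _ => measurableSet_all _)]
    · exact Finset.sum_congr rfl fun ω _ => hsing ω
    · intro x _ y _ hxy
      exact Set.disjoint_singleton.mpr hxy
  rw [h1, Ps]
  simp only [← Set.mem_toFinset]
  rw [Finset.sum_ite_mem, Finset.univ_inter]


def maskIn (F : Finset E) (ω : E → Bool) : E → Bool := fun x => if x ∈ F then ω x else false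

/-- Hybrid mask: on `J` use the second (duplicated) configuration freely, off `J` use the
first configuration off `F` and `0` on `F`. -/
def hyb (J F : Finset E) (p : (E → Bool) × (E → Bool)) : E → Bool :=
  fun x => if x ∈ J then p.2 x else if x ∉ F then p.1 x else false

/-- The interpolating events of van den Berg and Kesten. -/
def D (A B : Set (E → Bool)) (J : Finset E) : Set ((E → Bool) × (E → Bool)) :=
  {p | ∃ F : Finset E, maskIn F p.1 ∈ A ∧ hyb J F p ∈ B}

/-- Swap coordinate `e` between the two copies. -/
def σe (e : E) (p : (E → Bool) × (E → Bool)) : (E → Bool) × (E → Bool) :=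
  (Function.update p.1 e (p.2 e), Function.update p.2 e (p.1 e))

lemma σe_invol (e : E) (p : (E → Bool) × (E → Bool)) : σe e (σe e p) = p := by
  unfold σe
  refine Prod.ext ?_ ?_ <;> simp <;> funext x <;>
    rcases eq_or_ne x e with h | h <;> simp [Function.update, h]

lemma maskIn_le (F : Finset E) (ω : E → Bool) : maskIn F ω ≤ ω := by
  intro x
  by_cases h : x ∈ F <;> simp [maskIn, h]

lemma maskIn_univ (ω : E → Bool) : maskIn (Finset.univ : Finset E) ω = ω := by
  funext x; simp [maskIn]

lemma nu_mono (μ : E → Measure Bool) {S T : Set ((E → Bool) × (E → Bool))} (h : S ⊆ T) :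
    ν μ S ≤ ν μ T := by
  classical
  refine Finset.sum_le_sum fun p _ => ?_
  by_cases hp : p ∈ S
  · rw [if_pos hp, if_pos (h hp)]
  · rw [if_neg hp]
    exact zero_le

lemma nu_union_inter (μ : E → Measure Bool) (S T : Set ((E → Bool) × (E → Bool))) :
    ν μ (S ∪ T) + ν μ (S ∩ T) = ν μ S + ν μ T := by
  classical
  unfold ν
  rw [← Finset.sum_add_distrib, ← Finset.sum_add_distrib]
  refine Finset.sum_congr rfl fun p _ => ?_
  by_cases hS : p ∈ S <;> by_cases hT : p ∈ T <;>
    simp [hS, hT, Set.mem_union, Set.mem_inter_iff, add_comm]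

lemma W_update_update (μ : E → Measure Bool) (e : E) (ω ω' : E → Bool) :
    W μ (Function.update ω e (ω' e)) * W μ (Function.update ω' e (ω e))
      = W μ ω * W μ ω' := by
  have key : ∀ (g : E → Bool) (b : Bool),
      W μ (Function.update g e b) = μ e {b} * ∏ x ∈ Finset.univ.erase e, μ x {g x} := by
    intro g b
    rw [W, ← Finset.mul_prod_erase _ _ (Finset.mem_univ e), Function.update_self]
    congr 1
    refine Finset.prod_congr rfl fun x hx => ?_
    rw [Function.update_of_ne (Finset.ne_of_mem_erase hx)]
  have key2 : ∀ g : E → Bool,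
      W μ g = μ e {g e} * ∏ x ∈ Finset.univ.erase e, μ x {g x} := by
    intro g
    rw [W, ← Finset.mul_prod_erase _ _ (Finset.mem_univ e)]
  rw [key, key, key2 ω, key2 ω']
  ring

lemma nu_sigma (μ : E → Measure Bool) (e : E) (S : Set ((E → Bool) × (E → Bool))) :
    ν μ (σe e ⁻¹' S) = ν μ S := by
  classical
  have hbij : Function.Bijective (σe e (E := E)) :=
    Function.Involutive.bijective (σe_invol e)
  refine Fintype.sum_bijective (σe e) hbij _ _ fun p => ?_
  have hw : W μ p.1 * W μ p.2 = W μ (σe e p).1 * W μ (σe e p).2 :=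
    (W_update_update μ e p.1 p.2).symm
  simp only [Set.mem_preimage]
  by_cases hp : σe e p ∈ S
  · simp [hp, hw]
  · simp [hp]


section Crux

variable {A B : Set (E → Bool)}
variable (hA : ∀ ⦃ω ω' : E → Bool⦄, ω ≤ ω' → ω ∈ A → ω' ∈ A)
variable (hB : ∀ ⦃ω ω' : E → Bool⦄, ω ≤ ω' → ω ∈ B → ω' ∈ B)

include hB in
/-- If a witness set contains `e`, we can freely replace the `B`-value at `e`. -/
lemma mem_D_insert_of_mem_witness {J F : Finset E} {e : E} (he : e ∉ J) (heF : e ∈ F)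
    {p : (E → Bool) × (E → Bool)} (h1 : maskIn F p.1 ∈ A) (h2 : hyb J F p ∈ B) :
    p ∈ D A B (insert e J) := by
  refine ⟨F, h1, hB ?_ h2⟩
  intro x
  by_cases hxJ : x ∈ J
  · have : x ∈ insert e J := Finset.mem_insert_of_mem hxJ
    simp [hyb, hxJ, this]
  · rcases eq_or_ne x e with rfl | hxe
    · simp [hyb, he, heF]
    · have : x ∉ insert e J := by simp [hxe, hxJ]
      simp [hyb, hxJ, this]

include hA hB in
lemma claimB {J : Finset E} {e : E} (he : e ∉ J) :
    D A B J ⊆ D A B (insert e J) ∪ σe e ⁻¹' (D A B (insert e J)) := by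
  rintro p ⟨F, h1, h2⟩
  by_cases hF : e ∈ F
  · exact Or.inl (mem_D_insert_of_mem_witness hB he hF h1 h2)
  · refine Or.inr ?_
    refine ⟨F, ?_, ?_⟩
    · have : maskIn F (σe e p).1 = maskIn F p.1 := by
        funext x
        by_cases hx : x ∈ F
        · have hxe : x ≠ e := fun h => hF (h ▸ hx)
          simp [maskIn, hx, σe, Function.update_of_ne hxe]
        · simp [maskIn, hx]
      rw [this]; exact h1
    · have : hyb (insert e J) F (σe e p) = hyb J F p := by
        funext x
        rcases eq_or_ne x e with rfl | hxe
        · simp [hyb, he, hF, σe]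
        · by_cases hxJ : x ∈ J
          · simp [hyb, hxJ, Finset.mem_insert_of_mem hxJ, σe, Function.update_of_ne hxe]
          · have hx' : x ∉ insert e J := by simp [hxe, hxJ]
            by_cases hxF : x ∈ F <;>
              simp [hyb, hx', hxJ, hxF, σe, Function.update_of_ne hxe]
      rw [this]; exact h2

include hA hB in
lemma claimA {J : Finset E} {e : E} (he : e ∉ J) :
    D A B J ∩ σe e ⁻¹' (D A B J) ⊆ D A B (insert e J) := by
  rintro p ⟨⟨F, h1, h2⟩, ⟨G, g1, g2⟩⟩
  by_cases hF : e ∈ F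
  · exact mem_D_insert_of_mem_witness hB he hF h1 h2
  by_cases hG : e ∈ G
  · rcases le_total (p.2 e) (p.1 e) with h21 | h12
    · -- use witness G
      refine ⟨G, hA ?_ g1, hB ?_ g2⟩
      · intro x
        by_cases hx : x ∈ G
        · rcases eq_or_ne x e with rfl | hxe
          · simpa [maskIn, hx, σe] using h21
          · simp [maskIn, hx, σe, Function.update_of_ne hxe]
        · simp [maskIn, hx]
      · intro x
        rcases eq_or_ne x e with rfl | hxe
        · simp [hyb, he, hG, Finset.mem_insert_self]
        · by_cases hxJ : x ∈ J
          · simp [hyb, hxJ, Finset.mem_insert_of_mem hxJ, σe, Function.update_of_ne hxe]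
          · have hx' : x ∉ insert e J := by simp [hxe, hxJ]
            by_cases hxG : x ∈ G <;>
              simp [hyb, hx', hxJ, hxG, σe, Function.update_of_ne hxe]
    · -- use witness F
      refine ⟨F, h1, hB ?_ h2⟩
      intro x
      rcases eq_or_ne x e with rfl | hxe
      · simpa [hyb, he, hF, Finset.mem_insert_self] using h12
      · by_cases hxJ : x ∈ J
        · simp [hyb, hxJ, Finset.mem_insert_of_mem hxJ]
        · have hx' : x ∉ insert e J := by simp [hxe, hxJ]
          by_cases hxF : x ∈ F <;> simp [hyb, hx', hxJ, hxF]
  · -- e ∉ G : witness G works verbatim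
    refine ⟨G, ?_, ?_⟩
    · have : maskIn G (σe e p).1 = maskIn G p.1 := by
        funext x
        by_cases hx : x ∈ G
        · have hxe : x ≠ e := fun h => hG (h ▸ hx)
          simp [maskIn, hx, σe, Function.update_of_ne hxe]
        · simp [maskIn, hx]
      rw [← this]; exact g1
    · have : hyb J G (σe e p) = hyb (insert e J) G p := by
        funext x
        rcases eq_or_ne x e with rfl | hxe
        · simp [hyb, he, hG, σe, Finset.mem_insert_self]
        · by_cases hxJ : x ∈ J
          · simp [hyb, hxJ, Finset.mem_insert_of_mem hxJ, σe, Function.update_of_ne hxe]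
          · have hx' : x ∉ insert e J := by simp [hxe, hxJ]
            by_cases hxG : x ∈ G <;>
              simp [hyb, hx', hxJ, hxG, σe, Function.update_of_ne hxe]
      rw [← this]; exact g2


include hA hB in
lemma nu_step (μ : E → Measure Bool) {J : Finset E} {e : E} (he : e ∉ J) :
    ν μ (D A B J) ≤ ν μ (D A B (insert e J)) := by
  set S := D A B J with hS
  set T := D A B (insert e J) with hT
  have hU : S ∪ σe e ⁻¹' S ⊆ T ∪ σe e ⁻¹' T := by
    rintro p (hp | hp)
    · exact claimB hA hB he hp
    · rcases claimB hA hB he hp with h | h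
      · exact Or.inr h
      · rw [Set.mem_preimage, σe_invol] at h
        exact Or.inl h
  have hI : S ∩ σe e ⁻¹' S ⊆ T ∩ σe e ⁻¹' T := by
    rintro p ⟨h1, h2⟩
    refine ⟨claimA hA hB he ⟨h1, h2⟩, ?_⟩
    refine claimA hA hB he ⟨h2, ?_⟩
    rw [Set.mem_preimage, σe_invol]
    exact h1
  have h2 : (2 : ℝ≥0∞) * ν μ S ≤ 2 * ν μ T := by
    calc (2 : ℝ≥0∞) * ν μ S = ν μ S + ν μ (σe e ⁻¹' S) := by
          rw [nu_sigma, two_mul]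
      _ = ν μ (S ∪ σe e ⁻¹' S) + ν μ (S ∩ σe e ⁻¹' S) := (nu_union_inter μ _ _).symm
      _ ≤ ν μ (T ∪ σe e ⁻¹' T) + ν μ (T ∩ σe e ⁻¹' T) :=
          add_le_add (nu_mono μ hU) (nu_mono μ hI)
      _ = ν μ T + ν μ (σe e ⁻¹' T) := nu_union_inter μ _ _
      _ = 2 * ν μ T := by rw [nu_sigma, two_mul]
  exact (ENNReal.mul_le_mul_iff_right (by norm_num) (by norm_num)).mp h2

end Crux

lemma nu_rect (μ : E → Measure Bool) (S T : Set (E → Bool)) :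
    ν μ {p : (E → Bool) × (E → Bool) | p.1 ∈ S ∧ p.2 ∈ T} = Ps μ S * Ps μ T := by
  classical
  rw [ν, Ps, Ps, Finset.sum_mul_sum, Fintype.sum_prod_type]
  refine Finset.sum_congr rfl fun ω _ => Finset.sum_congr rfl fun ω' _ => ?_
  by_cases h1 : ω ∈ S <;> by_cases h2 : ω' ∈ T <;> simp [h1, h2]

lemma Ps_univ (μ : E → Measure Bool) [∀ e, IsProbabilityMeasure (μ e)] :
    Ps μ (Set.univ : Set (E → Bool)) = 1 := by
  rw [← measure_eq_Ps]
  exact measure_univ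

lemma D_empty (A B : Set (E → Bool)) :
    D A B (∅ : Finset E) = {p : (E → Bool) × (E → Bool) |
      p.1 ∈ {ω | ∃ F : Finset E,
        (fun x => if x ∈ F then ω x else false) ∈ A ∧
        (fun x => if x ∉ F then ω x else false) ∈ B} ∧ p.2 ∈ Set.univ} := by
  have h : ∀ (p : (E → Bool) × (E → Bool)) (F : Finset E),
      hyb (∅ : Finset E) F p = fun x => if x ∉ F then p.1 x else false := by
    intro p F; funext x; simp [hyb]
  ext p
  simp only [D, h, Set.mem_setOf_eq, Set.mem_univ, and_true]
  rfl

lemma D_univ_eq {A B : Set (E → Bool)}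
    (hA : ∀ ⦃ω ω' : E → Bool⦄, ω ≤ ω' → ω ∈ A → ω' ∈ A) :
    D A B (Finset.univ : Finset E) = {p : (E → Bool) × (E → Bool) | p.1 ∈ A ∧ p.2 ∈ B} := by
  have h : ∀ (p : (E → Bool) × (E → Bool)) (F : Finset E),
      hyb (Finset.univ : Finset E) F p = p.2 := by
    intro p F; funext x; simp [hyb]
  ext p
  constructor
  · rintro ⟨F, h1, h2⟩
    rw [h] at h2
    exact ⟨hA (maskIn_le F p.1) h1, h2⟩
  · rintro ⟨h1, h2⟩
    refine ⟨Finset.univ, ?_, ?_⟩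
    · rwa [maskIn_univ]
    · rwa [h]

end BKproof

/-- **The van den Berg–Kesten (BK) inequality.** Let `E` be a finite set and
`P` a product probability measure on `Ω = {0,1}^E` (modelled as `E → Bool`).
For increasing events `A, B`, the disjoint occurrence
`A ∘ B = {ω : ∃ F ⊆ E, ω_F ∈ A and ω_{E∖F} ∈ B}` satisfies
`P(A ∘ B) ≤ P(A) P(B)`. Here `ω_F` agrees with `ω` on `F` and is `0` off `F`. -/
theorem van_den_berg_kesten_inequality
    {E : Type*} [Fintype E] [DecidableEq E]
    (μ : E → Measure Bool) [∀ e, IsProbabilityMeasure (μ e)]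
    (P : Measure (E → Bool)) (hP : P = Measure.pi μ)
    (A B : Set (E → Bool))
    (hA : ∀ ⦃ω ω' : E → Bool⦄, ω ≤ ω' → ω ∈ A → ω' ∈ A)
    (hB : ∀ ⦃ω ω' : E → Bool⦄, ω ≤ ω' → ω ∈ B → ω' ∈ B) :
    P {ω | ∃ F : Finset E,
        (fun e => if e ∈ F then ω e else false) ∈ A ∧
        (fun e => if e ∉ F then ω e else false) ∈ B} ≤ P A * P B := by
  classical
  subst hP
  set C : Set (E → Bool) := {ω | ∃ F : Finset E,
      (fun e => if e ∈ F then ω e else false) ∈ A ∧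
      (fun e => if e ∉ F then ω e else false) ∈ B} with hC
  have key : ∀ J : Finset E, BKproof.ν μ (BKproof.D A B ∅) ≤ BKproof.ν μ (BKproof.D A B J) := by
    intro J
    induction J using Finset.induction_on with
    | empty => exact le_rfl
    | @insert e J he ih => exact le_trans ih (BKproof.nu_step hA hB μ he)
  calc Measure.pi μ C = BKproof.Ps μ C := BKproof.measure_eq_Ps μ C
    _ = BKproof.Ps μ C * BKproof.Ps μ Set.univ := by rw [BKproof.Ps_univ, mul_one]
    _ = BKproof.ν μ (BKproof.D A B ∅) := by
        rw [BKproof.D_empty A B, BKproof.nu_rect]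
    _ ≤ BKproof.ν μ (BKproof.D A B Finset.univ) := key Finset.univ
    _ = BKproof.Ps μ A * BKproof.Ps μ B := by
        rw [BKproof.D_univ_eq hA, BKproof.nu_rect]
    _ = Measure.pi μ A * Measure.pi μ B := by
        rw [BKproof.measure_eq_Ps, BKproof.measure_eq_Ps]
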